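/- For all real x > 0, x^3 (sinh(2x)/2 - x) - 6 (x^2 (cosh(2x)+1)/2 + (cosh(2x)-1)/2 - x sinh(2x)) > 0. -/

import Mathlib

open Real

lemma aux_pos (f f' : ℝ → ℝ) (hd : ∀ x, HasDerivAt f (f' x) x)
    (h0 : f 0 = 0) (hpos : ∀ y, 0 < y → 0 < f' y) :
    ∀ x, 0 < x → 0 < f x := by
  intro x hx
  have hm : StrictMonoOn f (Set.Ici 0) := by
    apply strictMonoOn_of_deriv_pos (convex_Ici 0)
    · exact fun y _ => (hd y).continuousAt.continuousWithinAt
    · intro y hy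
      rw [interior_Ici] at hy
      rw [(hd y).deriv]
      exact hpos y hy
  have := hm Set.self_mem_Ici (Set.mem_Ici.mpr hx.le) hx
  linarith

lemma d_f4 (x : ℝ) :
    HasDerivAt (fun y : ℝ => (y^2 - 3) * Real.sinh y + 3*y * Real.cosh y)
      (5*x*Real.sinh x + x^2*Real.cosh x) x := by
  have hs : HasDerivAt Real.sinh (Real.cosh x) x := Real.hasDerivAt_sinh x
  have hc : HasDerivAt Real.cosh (Real.sinh x) x := Real.hasDerivAt_cosh x
  have hp : HasDerivAt (fun y : ℝ => y^2 - 3) (2*x) x := by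
    have h' := (hasDerivAt_pow 2 x).sub_const 3
    refine h'.congr_deriv ?_
    push_cast; ring
  have hq : HasDerivAt (fun y : ℝ => 3*y) 3 x := by
    have h' := (hasDerivAt_id x).const_mul 3
    refine h'.congr_deriv ?_
    ring
  have H := (hp.mul hs).add (hq.mul hc)
  refine H.congr_deriv ?_
  ring

lemma f4_pos : ∀ x, 0 < x → 0 < (x^2 - 3) * Real.sinh x + 3*x * Real.cosh x := by
  apply aux_pos _ (fun x => 5*x*Real.sinh x + x^2*Real.cosh x) d_f4 (by simp)
  intro y hy
  have h1 := Real.sinh_pos_iff.mpr hy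
  have h2 := Real.cosh_pos (x := y)
  nlinarith

lemma d_f3 (x : ℝ) :
    HasDerivAt (fun y : ℝ => 3 * Real.sinh y + (y^3 - 3*y) * Real.cosh y)
      ((x^3 - 3*x) * Real.sinh x + 3*x^2 * Real.cosh x) x := by
  have hs : HasDerivAt Real.sinh (Real.cosh x) x := Real.hasDerivAt_sinh x
  have hc : HasDerivAt Real.cosh (Real.sinh x) x := Real.hasDerivAt_cosh x
  have hq : HasDerivAt (fun y : ℝ => y^3 - 3*y) (3*x^2 - 3) x := by
    have h' := (hasDerivAt_pow 3 x).sub ((hasDerivAt_id x).const_mul 3)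
    refine h'.congr_deriv ?_
    push_cast; ring
  have H := (hs.const_mul 3).add (hq.mul hc)
  refine H.congr_deriv ?_
  ring

lemma f3_pos : ∀ x, 0 < x → 0 < 3 * Real.sinh x + (x^3 - 3*x) * Real.cosh x := by
  apply aux_pos _ (fun x => (x^3 - 3*x) * Real.sinh x + 3*x^2 * Real.cosh x) d_f3 (by simp)
  intro y hy
  have h4 := f4_pos y hy
  nlinarith

lemma d_g3 (x : ℝ) :
    HasDerivAt (fun y : ℝ => (15 - 6*y^2) * Real.sinh (2*y) + (4*y^3 - 6*y) * Real.cosh (2*y) - 24*y)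
      ((8*x^3 - 24*x) * Real.sinh (2*x) + 24 * Real.cosh (2*x) - 24) x := by
  have h2 : HasDerivAt (fun y : ℝ => 2*y) 2 x := by
    have h' := (hasDerivAt_id x).const_mul 2
    refine h'.congr_deriv ?_
    ring
  have hs := h2.sinh
  have hc := h2.cosh
  have hp : HasDerivAt (fun y : ℝ => 15 - 6*y^2) (-12*x) x := by
    have h' := (hasDerivAt_const x (15:ℝ)).sub ((hasDerivAt_pow 2 x).const_mul 6)
    refine h'.congr_deriv ?_
    push_cast; ring
  have hq : HasDerivAt (fun y : ℝ => 4*y^3 - 6*y) (12*x^2 - 6) x := by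
    have h' := ((hasDerivAt_pow 3 x).const_mul 4).sub ((hasDerivAt_id x).const_mul 6)
    refine h'.congr_deriv ?_
    push_cast; ring
  have hr : HasDerivAt (fun y : ℝ => 24*y) 24 x := by
    have h' := (hasDerivAt_id x).const_mul 24
    refine h'.congr_deriv ?_
    ring
  have H := ((hp.mul hs).add (hq.mul hc)).sub hr
  refine H.congr_deriv ?_
  ring

lemma g3_pos : ∀ x, 0 < x →
    0 < (15 - 6*x^2) * Real.sinh (2*x) + (4*x^3 - 6*x) * Real.cosh (2*x) - 24*x := by
  apply aux_pos _ (fun x => (8*x^3 - 24*x) * Real.sinh (2*x) + 24 * Real.cosh (2*x) - 24) d_g3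
    (by simp)
  intro y hy
  have e1 : Real.sinh (2*y) = 2 * Real.sinh y * Real.cosh y := Real.sinh_two_mul y
  have e2 : Real.cosh (2*y) = Real.cosh y ^ 2 + Real.sinh y ^ 2 := Real.cosh_two_mul y
  have e3 : Real.cosh y ^ 2 = 1 + Real.sinh y ^ 2 := Real.cosh_sq' y
  have h3 := mul_pos (Real.sinh_pos_iff.mpr hy) (f3_pos y hy)
  rw [e1, e2]
  nlinarith [h3, e3]

lemma d_g2 (x : ℝ) :
    HasDerivAt (fun y : ℝ => (2*y^3 + 3*y) * Real.sinh (2*y) + (6 - 6*y^2) * Real.cosh (2*y) - 12*y^2 - 6)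
      ((15 - 6*x^2) * Real.sinh (2*x) + (4*x^3 - 6*x) * Real.cosh (2*x) - 24*x) x := by
  have h2 : HasDerivAt (fun y : ℝ => 2*y) 2 x := by
    have h' := (hasDerivAt_id x).const_mul 2
    refine h'.congr_deriv ?_
    ring
  have hs := h2.sinh
  have hc := h2.cosh
  have hp : HasDerivAt (fun y : ℝ => 2*y^3 + 3*y) (6*x^2 + 3) x := by
    have h' := ((hasDerivAt_pow 3 x).const_mul 2).add ((hasDerivAt_id x).const_mul 3)
    refine h'.congr_deriv ?_
    push_cast; ring
  have hq : HasDerivAt (fun y : ℝ => 6 - 6*y^2) (-12*x) x := by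
    have h' := (hasDerivAt_const x (6:ℝ)).sub ((hasDerivAt_pow 2 x).const_mul 6)
    refine h'.congr_deriv ?_
    push_cast; ring
  have hr : HasDerivAt (fun y : ℝ => 12*y^2) (24*x) x := by
    have h' := (hasDerivAt_pow 2 x).const_mul 12
    refine h'.congr_deriv ?_
    push_cast; ring
  have H := (((hp.mul hs).add (hq.mul hc)).sub hr).sub_const 6
  refine H.congr_deriv ?_
  ring

lemma g2_pos : ∀ x, 0 < x →
    0 < (2*x^3 + 3*x) * Real.sinh (2*x) + (6 - 6*x^2) * Real.cosh (2*x) - 12*x^2 - 6 := by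
  apply aux_pos _
    (fun x => (15 - 6*x^2) * Real.sinh (2*x) + (4*x^3 - 6*x) * Real.cosh (2*x) - 24*x) d_g2
    (by simp)
  exact g3_pos

lemma d_g1 (x : ℝ) :
    HasDerivAt (fun y : ℝ => -9*y^2 * Real.sinh (2*y) + (2*y^3 + 12*y) * Real.cosh (2*y) - 8*y^3 - 12*y)
      ((4*x^3 + 6*x) * Real.sinh (2*x) + (12 - 12*x^2) * Real.cosh (2*x) - 24*x^2 - 12) x := by
  have h2 : HasDerivAt (fun y : ℝ => 2*y) 2 x := by
    have h' := (hasDerivAt_id x).const_mul 2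
    refine h'.congr_deriv ?_
    ring
  have hs := h2.sinh
  have hc := h2.cosh
  have hp : HasDerivAt (fun y : ℝ => -9*y^2) (-18*x) x := by
    have h' := (hasDerivAt_pow 2 x).const_mul (-9)
    refine h'.congr_deriv ?_
    push_cast; ring
  have hq : HasDerivAt (fun y : ℝ => 2*y^3 + 12*y) (6*x^2 + 12) x := by
    have h' := ((hasDerivAt_pow 3 x).const_mul 2).add ((hasDerivAt_id x).const_mul 12)
    refine h'.congr_deriv ?_
    push_cast; ring
  have hr : HasDerivAt (fun y : ℝ => 8*y^3) (24*x^2) x := by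
    have h' := (hasDerivAt_pow 3 x).const_mul 8
    refine h'.congr_deriv ?_
    push_cast; ring
  have hr2 : HasDerivAt (fun y : ℝ => 12*y) 12 x := by
    have h' := (hasDerivAt_id x).const_mul 12
    refine h'.congr_deriv ?_
    ring
  have H := (((hp.mul hs).add (hq.mul hc)).sub hr).sub hr2
  refine H.congr_deriv ?_
  ring

lemma g1_pos : ∀ x, 0 < x →
    0 < -9*x^2 * Real.sinh (2*x) + (2*x^3 + 12*x) * Real.cosh (2*x) - 8*x^3 - 12*x := by
  apply aux_pos _
    (fun x => (4*x^3 + 6*x) * Real.sinh (2*x) + (12 - 12*x^2) * Real.cosh (2*x) - 24*x^2 - 12) d_g1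
    (by simp)
  intro y hy
  have := g2_pos y hy
  nlinarith

lemma d_g0 (x : ℝ) :
    HasDerivAt (fun y : ℝ => (y^3 + 12*y) * Real.sinh (2*y) + (-6*y^2 - 6) * Real.cosh (2*y) - 2*y^4 - 6*y^2 + 6)
      (-9*x^2 * Real.sinh (2*x) + (2*x^3 + 12*x) * Real.cosh (2*x) - 8*x^3 - 12*x) x := by
  have h2 : HasDerivAt (fun y : ℝ => 2*y) 2 x := by
    have h' := (hasDerivAt_id x).const_mul 2
    refine h'.congr_deriv ?_
    ring
  have hs := h2.sinh
  have hc := h2.cosh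
  have hp : HasDerivAt (fun y : ℝ => y^3 + 12*y) (3*x^2 + 12) x := by
    have h' := (hasDerivAt_pow 3 x).add ((hasDerivAt_id x).const_mul 12)
    refine h'.congr_deriv ?_
    push_cast; ring
  have hq : HasDerivAt (fun y : ℝ => -6*y^2 - 6) (-12*x) x := by
    have h' := ((hasDerivAt_pow 2 x).const_mul (-6)).sub_const 6
    refine h'.congr_deriv ?_
    push_cast; ring
  have hr : HasDerivAt (fun y : ℝ => 2*y^4) (8*x^3) x := by
    have h' := (hasDerivAt_pow 4 x).const_mul 2
    refine h'.congr_deriv ?_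
    push_cast; ring
  have hr2 : HasDerivAt (fun y : ℝ => 6*y^2) (12*x) x := by
    have h' := (hasDerivAt_pow 2 x).const_mul 6
    refine h'.congr_deriv ?_
    push_cast; ring
  have H := ((((hp.mul hs).add (hq.mul hc)).sub hr).sub hr2).add_const 6
  refine H.congr_deriv ?_
  ring

lemma g0_pos : ∀ x, 0 < x →
    0 < (x^3 + 12*x) * Real.sinh (2*x) + (-6*x^2 - 6) * Real.cosh (2*x) - 2*x^4 - 6*x^2 + 6 := by
  apply aux_pos _
    (fun x => -9*x^2 * Real.sinh (2*x) + (2*x^3 + 12*x) * Real.cosh (2*x) - 8*x^3 - 12*x) d_g0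
    (by simp)
  exact g1_pos

theorem stmt_2 (x : ℝ) (hx : 0 < x) :
    x ^ 3 * (Real.sinh (2 * x) / 2 - x) -
      6 * (x ^ 2 * (Real.cosh (2 * x) + 1) / 2 + (Real.cosh (2 * x) - 1) / 2
        - x * Real.sinh (2 * x)) > 0 := by
  have h := g0_pos x hx
  nlinarith [h]
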